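/- Let ρ be a unital *-endomorphism of a unital C*-algebra A with a weak permutation symmetry ε. Then for every r ∈ ℕ the unitary ε(r,1) belongs to (ρ^{r+1},ρ^{r+1})_ε, i.e. ε(r,1) commutes with ρ^{r+1}(a) for all a ∈ A and satisfies ε(r+1,1)·ε(r,1) = ρ(ε(r,1))·ε(r+1,1). -/
import Mathlib


/-- The predicate defining the group `ℙ_∞`: a permutation of `ℕ` belongs to `ℙ_∞`
iff it moves only finitely many points. -/
def HasFiniteSupp (p : Equiv.Perm ℕ) : Prop := {x : ℕ | p x ≠ x}.Finite

/-- Auxiliary function for the shift. -/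
def shiftFun (f : ℕ → ℕ) : ℕ → ℕ
  | 0 => 0
  | n + 1 => f n + 1

/-- The shift `𝕊` on permutations of `ℕ` (`0`-indexed): `(𝕊p)(0) = 0`,
`(𝕊p)(n+1) = p(n)+1`. -/
def shiftPerm (p : Equiv.Perm ℕ) : Equiv.Perm ℕ where
  toFun := shiftFun p
  invFun := shiftFun p.symm
  left_inv := by intro n; cases n <;> simp [shiftFun]
  right_inv := by intro n; cases n <;> simp [shiftFun]

/-- Auxiliary function for the block permutation. -/
def blockFun (r s : ℕ) (n : ℕ) : ℕ :=
  if n < r then n + s else if n < r + s then n - r else n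

/-- The block permutation `(r,s) ∈ ℙ_{r+s}` permuting the first `r` terms with the
remaining `s` (`0`-indexed: `i ↦ i+s` for `i < r`, `i ↦ i-r` for `r ≤ i < r+s`,
fixing all other points). -/
def blockPerm (r s : ℕ) : Equiv.Perm ℕ where
  toFun := blockFun r s
  invFun := blockFun s r
  left_inv := by intro n; simp only [blockFun]; split_ifs <;> omega
  right_inv := by intro n; simp only [blockFun]; split_ifs <;> omega

/-- A weak permutation symmetry for the unital *-endomorphism `ρ` of `A`: a group
homomorphism `p ↦ ε(p)` from `ℙ_∞` into the unitary group of `A` such that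
`ε(𝕊p) = ρ(ε(p))` for all `p ∈ ℙ_∞` and `ε(p) ∈ (ρ^n, ρ^n)` for all `p ∈ ℙ_n`
(where `ℙ_n` is the subgroup of permutations fixing every point out of the first `n`). -/
structure WeakPermSymm {A : Type*} [NormedRing A] [StarRing A] [CStarRing A]
    [CompleteSpace A] [NormedAlgebra ℂ A] [StarModule ℂ A]
    (ρ : A →⋆ₐ[ℂ] A) (ε : Equiv.Perm ℕ → A) : Prop where
  map_one : ε 1 = 1
  map_mul : ∀ p q : Equiv.Perm ℕ, HasFiniteSupp p → HasFiniteSupp q →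
    ε (p * q) = ε p * ε q
  mem_unitary : ∀ p : Equiv.Perm ℕ, HasFiniteSupp p → ε p ∈ unitary A
  shift : ∀ p : Equiv.Perm ℕ, HasFiniteSupp p → ε (shiftPerm p) = ρ (ε p)
  comm : ∀ (n : ℕ) (p : Equiv.Perm ℕ), (∀ m : ℕ, n ≤ m → p m = m) →
    ∀ a : A, ε p * (⇑ρ)^[n] a = (⇑ρ)^[n] a * ε p

variable {A : Type*} [NormedRing A] [StarRing A] [CStarRing A] [CompleteSpace A]
  [NormedAlgebra ℂ A] [StarModule ℂ A]

/-- The intertwiner space `(ρ^r, ρ^s) := {t ∈ A : ρ^s(a)·t = t·ρ^r(a) ∀ a ∈ A}`. -/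
def IsIntertwiner (ρ : A →⋆ₐ[ℂ] A) (r s : ℕ) (t : A) : Prop :=
  ∀ a : A, (⇑ρ)^[s] a * t = t * (⇑ρ)^[r] a

/-- The symmetry intertwiner space
`(ρ^r, ρ^s)_ε := {t ∈ (ρ^r, ρ^s) : ε(s,1)·t = ρ(t)·ε(r,1)}`. -/
def IsSymIntertwiner (ρ : A →⋆ₐ[ℂ] A) (ε : Equiv.Perm ℕ → A) (r s : ℕ) (t : A) : Prop :=
  IsIntertwiner ρ r s t ∧ ε (blockPerm s 1) * t = ρ t * ε (blockPerm r 1)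

lemma hasFiniteSupp_of_fix {p : Equiv.Perm ℕ} {n : ℕ} (h : ∀ m, n ≤ m → p m = m) :
    HasFiniteSupp p :=
  (Set.finite_Iio n).subset fun x hx => by
    by_contra hlt
    exact hx (h x (le_of_not_gt hlt))

lemma blockPerm_fix (r s : ℕ) : ∀ m, r + s ≤ m → blockPerm r s m = m := by
  intro m hm
  show blockFun r s m = m
  unfold blockFun
  split_ifs <;> omega

lemma blockPerm_hfs (r s : ℕ) : HasFiniteSupp (blockPerm r s) :=
  hasFiniteSupp_of_fix (blockPerm_fix r s)

lemma shiftPerm_hfs {p : Equiv.Perm ℕ} (h : HasFiniteSupp p) :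
    HasFiniteSupp (shiftPerm p) := by
  have : {x : ℕ | shiftPerm p x ≠ x} ⊆ (fun n => n + 1) '' {x : ℕ | p x ≠ x} := by
    intro x hx
    cases x with
    | zero => exact absurd rfl hx
    | succ n =>
      refine ⟨n, fun hn => hx ?_, rfl⟩
      show shiftFun p (n+1) = n+1
      simp [shiftFun, hn]
  exact ((h.image _)).subset this

lemma key_perm_eq (r : ℕ) :
    blockPerm (r + 1) 1 * blockPerm r 1 = shiftPerm (blockPerm r 1) * blockPerm (r + 1) 1 := by
  ext n
  show blockFun (r+1) 1 (blockFun r 1 n) = shiftFun (blockPerm r 1) (blockFun (r+1) 1 n)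
  rcases lt_trichotomy n r with h | heq | h
  · have h1 : blockFun r 1 n = n + 1 := by unfold blockFun; split_ifs <;> omega
    have h2 : blockFun (r+1) 1 n = n + 1 := by unfold blockFun; split_ifs <;> omega
    rw [h1, h2]
    show blockFun (r+1) 1 (n+1) = blockFun r 1 n + 1
    unfold blockFun; split_ifs <;> omega
  · have h1 : blockFun r 1 n = 0 := by unfold blockFun; split_ifs <;> omega
    have h2 : blockFun (r+1) 1 n = r + 1 := by unfold blockFun; split_ifs <;> omega
    rw [h1, h2]
    show blockFun (r+1) 1 0 = blockFun r 1 r + 1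
    have h1' : blockFun r 1 r = 0 := by unfold blockFun; split_ifs <;> omega
    rw [h1']; unfold blockFun; split_ifs <;> omega
  · obtain ⟨m, rfl⟩ : ∃ m, n = m + 1 := ⟨n - 1, by omega⟩
    have h1 : blockFun r 1 (m+1) = m + 1 := by unfold blockFun; split_ifs <;> omega
    rw [h1]
    by_cases hm : m = r
    · have h2 : blockFun (r+1) 1 (m+1) = 0 := by unfold blockFun; split_ifs <;> omega
      rw [h2]; rfl
    · have h2 : blockFun (r+1) 1 (m+1) = m + 1 := by unfold blockFun; split_ifs <;> omega
      have h3 : blockFun r 1 m = m := by unfold blockFun; split_ifs <;> omega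
      rw [h2]
      show m + 1 = blockFun r 1 m + 1
      rw [h3]

/-- Let `ρ` be a unital *-endomorphism of a unital C*-algebra `A` with
a weak permutation symmetry `ε`.  Then for every `r ∈ ℕ` the unitary `ε(r,1)` belongs
to `(ρ^{r+1}, ρ^{r+1})_ε`, i.e. `ε(r,1)` commutes with `ρ^{r+1}(a)` for every `a ∈ A`
and satisfies `ε(r+1,1)·ε(r,1) = ρ(ε(r,1))·ε(r+1,1)`. -/
theorem symIntertwiner_block
    (ρ : A →⋆ₐ[ℂ] A) (ε : Equiv.Perm ℕ → A) (hws : WeakPermSymm ρ ε) (r : ℕ) :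
    (∀ a : A, ε (blockPerm r 1) * (⇑ρ)^[r + 1] a = (⇑ρ)^[r + 1] a * ε (blockPerm r 1)) ∧
      ε (blockPerm (r + 1) 1) * ε (blockPerm r 1)
        = ρ (ε (blockPerm r 1)) * ε (blockPerm (r + 1) 1) := by
  constructor
  · exact hws.comm (r + 1) _ (blockPerm_fix r 1)
  · rw [← hws.map_mul _ _ (blockPerm_hfs (r+1) 1) (blockPerm_hfs r 1), key_perm_eq,
      hws.map_mul _ _ (shiftPerm_hfs (blockPerm_hfs r 1)) (blockPerm_hfs (r+1) 1),
      hws.shift _ (blockPerm_hfs r 1)]
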